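/- Let d be an integer and y ∈ V a nonzero element with homogeneous components y_i satisfying y_i = 0 for i < d and z := y_d ≠ 0. Define 𝒢_{y,d} = {𝔤 ∈ 𝒢 : the component (𝔤·y)_a = 0 for all a < d}, 𝒫 = ⊕_{i≥0} 𝒢_i, 𝒦 = {𝔤 ∈ 𝒢 : 𝔤·y = 0}, and ℋ = {𝔤 ∈ 𝒢 : 𝔤·z = 0}. Then 𝒢_{y,d} is a linear subspace of 𝒢 containing 𝒫 + 𝒦, and there exists a linear subspace F ⊆ 𝒢_{y,d} with dim_ℂ(F) ≤ dim_ℂ(ℋ) − dim_ℂ(𝒦) such that 𝒢_{y,d} = 𝒫 + 𝒦 + F (sum of subspaces). -/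
import Mathlib


open DirectSum Module

/-- The degree-`i` homogeneous component of `v` with respect to the grading `𝒲`. -/
noncomputable def grComp {W : Type*} [AddCommGroup W] [Module ℂ W]
    (𝒲 : ℤ → Submodule ℂ W) [Decomposition 𝒲] (v : W) (i : ℤ) : W :=
  ((decompose 𝒲 v) i : W)

/-- The Lie algebra stabilizer `{𝔤 ∈ L | 𝔤 ⬝ v = 0}` of `v`, as a subspace of `L`. -/
def lieStab (L : Type*) {V : Type*} [LieRing L] [LieAlgebra ℂ L]
    [AddCommGroup V] [Module ℂ V] [LieRingModule L V] [LieModule ℂ L V]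
    (v : V) : Submodule ℂ L where
  carrier := {g : L | ⁅g, v⁆ = 0}
  add_mem' := by
    intro a b ha hb
    simp only [Set.mem_setOf_eq] at *
    rw [add_lie, ha, hb, add_zero]
  zero_mem' := zero_lie v
  smul_mem' := by
    intro c g hg
    simp only [Set.mem_setOf_eq] at *
    rw [smul_lie, hg, smul_zero]

noncomputable def grCmap {W : Type*} [AddCommGroup W] [Module ℂ W]
    (𝒲 : ℤ → Submodule ℂ W) [Decomposition 𝒲] (a : ℤ) : W →ₗ[ℂ] W :=
  (𝒲 a).subtype ∘ₗ (DFinsupp.lapply a) ∘ₗ (decomposeLinearEquiv 𝒲).toLinearMap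

section Aux

variable {M N : Type*} [AddCommGroup M] [Module ℂ M] [AddCommGroup N] [Module ℂ N]

/-- Restricted rank-nullity. -/
lemma aux_finrank_map_add (f : M →ₗ[ℂ] N) (p : Submodule ℂ M) [FiniteDimensional ℂ p] :
    finrank ℂ (p.map f) + finrank ℂ ↥(p ⊓ LinearMap.ker f) = finrank ℂ p := by
  have h := LinearMap.finrank_range_add_finrank_ker (f.domRestrict p)
  rw [LinearMap.range_domRestrict] at h
  have h2 : LinearMap.ker (f.domRestrict p) =
      Submodule.comap p.subtype (p ⊓ LinearMap.ker f) := by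
    rw [LinearMap.ker_domRestrict]
    ext x
    simp [Submodule.mem_comap, x.2]
  rw [h2] at h
  rwa [(Submodule.comapSubtypeEquivOfLe
    (inf_le_left : p ⊓ LinearMap.ker f ≤ p)).finrank_eq] at h

lemma aux_finrank_biSup_le [FiniteDimensional ℂ M] (p : ℤ → Submodule ℂ M) (t : Finset ℤ) :
    finrank ℂ ↥(⨆ i ∈ t, p i) ≤ ∑ i ∈ t, finrank ℂ (p i) := by
  classical
  induction t using Finset.induction_on with
  | empty => simp
  | @insert a t ha ih =>
      rw [Finset.iSup_insert, Finset.sum_insert ha]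
      have h := Submodule.finrank_sup_add_finrank_inf_eq (p a) (⨆ i ∈ t, p i)
      omega

lemma aux_finrank_biSup_eq [FiniteDimensional ℂ M] (S : ℤ → Submodule ℂ M)
    (hSind : iSupIndep S) (t : Finset ℤ) :
    finrank ℂ ↥(⨆ i ∈ t, S i) = ∑ i ∈ t, finrank ℂ (S i) := by
  classical
  induction t using Finset.induction_on with
  | empty => simp
  | @insert a t ha ih =>
      rw [Finset.iSup_insert, Finset.sum_insert ha, ← ih]
      have hd : Disjoint (S a) (⨆ i ∈ t, S i) := by
        refine (hSind a).mono_right ?_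
        refine iSup₂_le fun i hi => le_iSup₂_of_le i ?_ le_rfl
        rintro rfl; exact ha hi
      have h := Submodule.finrank_sup_add_finrank_inf_eq (S a) (⨆ i ∈ t, S i)
      rw [hd.eq_bot, finrank_bot, add_zero] at h
      exact h

end Aux

theorem statement19 {L V : Type*} [LieRing L] [LieAlgebra ℂ L] [FiniteDimensional ℂ L]
    [AddCommGroup V] [Module ℂ V] [FiniteDimensional ℂ V]
    [LieRingModule L V] [LieModule ℂ L V]
    (𝒢 : ℤ → Submodule ℂ L) [Decomposition 𝒢]
    (𝒱 : ℤ → Submodule ℂ V) [Decomposition 𝒱]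
    (hbr : ∀ (i j : ℤ), ∀ x ∈ 𝒢 i, ∀ y ∈ 𝒢 j, ⁅x, y⁆ ∈ 𝒢 (i + j))
    (hact : ∀ (j i : ℤ), ∀ x ∈ 𝒢 j, ∀ v ∈ 𝒱 i, ⁅x, v⁆ ∈ 𝒱 (i + j))
    (d : ℤ) (y : V) (hy : y ≠ 0)
    (hlow : ∀ i < d, grComp 𝒱 y i = 0)
    (hz : grComp 𝒱 y d ≠ 0) :
    ∃ Gyd : Submodule ℂ L,
      (Gyd : Set L) = {g : L | ∀ a < d, grComp 𝒱 ⁅g, y⁆ a = 0} ∧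
      (⨆ i : ℤ, ⨆ _ : 0 ≤ i, 𝒢 i) ⊔ lieStab L y ≤ Gyd ∧
      ∃ F : Submodule ℂ L, F ≤ Gyd ∧
        (finrank ℂ F : ℤ) ≤
          (finrank ℂ (lieStab L (grComp 𝒱 y d)) : ℤ) - (finrank ℂ (lieStab L y) : ℤ) ∧
        Gyd = (⨆ i : ℤ, ⨆ _ : 0 ≤ i, 𝒢 i) ⊔ lieStab L y ⊔ F := by
  classical
  set z := grComp 𝒱 y d with hzdef
  set PS : Submodule ℂ L := ⨆ i : ℤ, ⨆ _ : 0 ≤ i, 𝒢 i with hPS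
  set KY : Submodule ℂ L := lieStab L y with hKY
  set HZ : Submodule ℂ L := lieStab L z with hHZ
  -- the linear maps A, B and the component maps
  set A : L →ₗ[ℂ] V :=
    { toFun := fun g => ⁅g, y⁆
      map_add' := fun a b => add_lie a b y
      map_smul' := fun c a => smul_lie c a y } with hA
  set B : L →ₗ[ℂ] V :=
    { toFun := fun g => ⁅g, z⁆
      map_add' := fun a b => add_lie a b z
      map_smul' := fun c a => smul_lie c a z } with hB
  set grC : ℤ → (V →ₗ[ℂ] V) := grCmap 𝒱 with hgrC
  have grC_apply : ∀ (a : ℤ) (v : V), grC a v = grComp 𝒱 v a := fun _ _ => rfl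
  have hkerA : LinearMap.ker A = KY := by
    ext g; rw [LinearMap.mem_ker]; exact Iff.rfl
  have hkerB : LinearMap.ker B = HZ := by
    ext g; rw [LinearMap.mem_ker]; exact Iff.rfl
  -- the key component computation
  have key1 : ∀ (i : ℤ) (x : L), x ∈ 𝒢 i → ∀ (a : ℤ) (w : V),
      grComp 𝒱 ⁅x, w⁆ a = ⁅x, grComp 𝒱 w (a - i)⁆ := by
    intro i x hx a
    refine DirectSum.Decomposition.inductionOn 𝒱 ?_ (fun {j} m => ?_) ?_
    · simp [grComp]
    · by_cases h : a = j + i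
      · have h1 : (⁅x, (m : V)⁆) ∈ 𝒱 a := h ▸ hact i j x hx (m : V) m.2
        have h2 : (m : V) ∈ 𝒱 (a - i) := by
          have : a - i = j := by omega
          rw [this]; exact m.2
        simp only [grComp]
        rw [DirectSum.decompose_of_mem_same 𝒱 h1, DirectSum.decompose_of_mem_same 𝒱 h2]
      · have h1 : (⁅x, (m : V)⁆) ∈ 𝒱 (j + i) := hact i j x hx (m : V) m.2
        have h2 : (m : V) ∈ 𝒱 j := m.2
        simp only [grComp]
        rw [DirectSum.decompose_of_mem_ne 𝒱 h1 (fun hc => h hc.symm),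
          DirectSum.decompose_of_mem_ne 𝒱 h2 (by omega : j ≠ a - i), lie_zero]
    · intro u v hu hv
      have e1 : grComp 𝒱 ⁅x, u + v⁆ a = grComp 𝒱 ⁅x, u⁆ a + grComp 𝒱 ⁅x, v⁆ a := by
        rw [lie_add]; exact map_add (grC a) _ _
      have e2 : grComp 𝒱 (u + v) (a - i) = grComp 𝒱 u (a - i) + grComp 𝒱 v (a - i) :=
        map_add (grC (a - i)) u v
      rw [e1, hu, hv, e2, lie_add]
  -- the subspace Gyd
  set Gyd : Submodule ℂ L := ⨅ (a : ℤ), ⨅ (_ : a < d), LinearMap.ker ((grC a) ∘ₗ A) with hGyd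
  have hGydmem : ∀ g : L, g ∈ Gyd ↔ ∀ a < d, grComp 𝒱 ⁅g, y⁆ a = 0 := by
    intro g
    simp only [hGyd, Submodule.mem_iInf, LinearMap.mem_ker, LinearMap.comp_apply]
    exact Iff.rfl
  have hset : (Gyd : Set L) = {g : L | ∀ a < d, grComp 𝒱 ⁅g, y⁆ a = 0} := by
    ext g
    simpa using hGydmem g
  -- P ⊔ K ≤ Gyd
  have hPle : PS ≤ Gyd := by
    refine iSup₂_le fun i hi => ?_
    intro g hg
    rw [hGydmem]
    intro a ha
    rw [key1 i g hg a, hlow (a - i) (by omega), lie_zero]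
  have hKle : KY ≤ Gyd := by
    intro g hg
    rw [hGydmem]
    intro a ha
    have : (⁅g, y⁆ : V) = 0 := hg
    rw [this]
    simp [grComp]
  have hPKle : PS ⊔ KY ≤ Gyd := sup_le hPle hKle
  -- the truncation map Q
  set Q : L →ₗ[ℂ] (ℤ → V) :=
    { toFun := fun g a => if a < d then grC a (A g) else 0
      map_add' := by
        intro g h; funext a
        by_cases h' : a < d <;> simp [h', map_add]
      map_smul' := by
        intro c g; funext a
        by_cases h' : a < d <;> simp [h', map_smul] } with hQ
  have hQapply : ∀ (g : L) (a : ℤ), a < d → Q g a = grComp 𝒱 ⁅g, y⁆ a := by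
    intro g a ha
    simp only [hQ, LinearMap.coe_mk, AddHom.coe_mk, if_pos ha]
    rfl
  have hkerQ : LinearMap.ker Q = Gyd := by
    ext g
    rw [LinearMap.mem_ker, hGydmem]
    constructor
    · intro h a ha
      have := congrFun h a
      rwa [hQapply g a ha] at this
    · intro h
      funext a
      by_cases ha : a < d
      · rw [hQapply g a ha, h a ha]; rfl
      · simp [hQ, ha]
  -- choice of complements S i of 𝒢 i ⊓ HZ in 𝒢 i
  have hexS : ∀ i : ℤ, ∃ S : Submodule ℂ L,
      S ≤ 𝒢 i ∧ S ⊓ HZ = ⊥ ∧ S ⊔ (𝒢 i ⊓ HZ) = 𝒢 i := by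
    intro i
    obtain ⟨C, hC⟩ := Submodule.exists_isCompl (Submodule.comap (𝒢 i).subtype (𝒢 i ⊓ HZ))
    refine ⟨C.map (𝒢 i).subtype, Submodule.map_subtype_le _ _, ?_, ?_⟩
    · rw [eq_bot_iff]
      rintro x ⟨hx1, hx2⟩
      obtain ⟨c, hc, rfl⟩ := hx1
      have hcm : c ∈ Submodule.comap (𝒢 i).subtype (𝒢 i ⊓ HZ) := by
        exact ⟨c.2, hx2⟩
      have : c = 0 := Submodule.disjoint_def.mp hC.symm.disjoint c hc hcm
      simp [this]
    · have h1 : Submodule.map (𝒢 i).subtype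
          (C ⊔ Submodule.comap (𝒢 i).subtype (𝒢 i ⊓ HZ)) = 𝒢 i := by
        rw [hC.symm.codisjoint.eq_top, Submodule.map_subtype_top]
      rw [Submodule.map_sup, Submodule.map_comap_subtype,
        show 𝒢 i ⊓ (𝒢 i ⊓ HZ) = 𝒢 i ⊓ HZ by rw [← inf_assoc, inf_idem]] at h1
      exact h1
  choose S hSle hSdisj hSsup using hexS
  -- independence
  have hGind : iSupIndep 𝒢 :=
    (DirectSum.Decomposition.isInternal 𝒢).submodule_iSupIndep
  have hSind : iSupIndep S := hGind.mono hSle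
  -- the key nonvanishing lemma
  have keyG : ∀ (t : Finset ℤ) (s : L), s ∈ (⨆ i ∈ t, S i) → s ≠ 0 →
      ∃ i₀ ∈ t, grComp 𝒱 ⁅s, y⁆ (d + i₀) ≠ 0 := by
    intro t s hs hs0
    rw [Submodule.mem_iSup_finset_iff_exists_sum] at hs
    obtain ⟨μ, hμ⟩ := hs
    set t' := t.filter (fun i => (μ i : L) ≠ 0) with ht'
    have hne : t'.Nonempty := by
      by_contra hcon
      apply hs0
      rw [← hμ]
      refine Finset.sum_eq_zero fun i hi => ?_
      by_contra hri
      exact hcon ⟨i, Finset.mem_filter.mpr ⟨hi, hri⟩⟩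
    set i₀ := t'.min' hne with hi₀def
    have hi₀t' : i₀ ∈ t' := t'.min'_mem hne
    have hi₀t : i₀ ∈ t := (Finset.mem_filter.mp hi₀t').1
    have hμ0 : (μ i₀ : L) ≠ 0 := (Finset.mem_filter.mp hi₀t').2
    refine ⟨i₀, hi₀t, ?_⟩
    have hAs : (⁅s, y⁆ : V) = ∑ i ∈ t, ⁅(μ i : L), y⁆ := by
      have : A s = ∑ i ∈ t, A (μ i : L) := by rw [← hμ, map_sum]
      exact this
    have hcomp : grComp 𝒱 ⁅s, y⁆ (d + i₀) = ⁅(μ i₀ : L), z⁆ := by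
      rw [hAs, ← grC_apply, map_sum]
      rw [Finset.sum_eq_single i₀ ?_ (fun h => absurd hi₀t h)]
      · rw [grC_apply, key1 i₀ (μ i₀ : L) (hSle i₀ (μ i₀).2),
          show d + i₀ - i₀ = d by omega]
      · intro i hi hne'
        rw [grC_apply, key1 i (μ i : L) (hSle i (μ i).2)]
        by_cases hzero : (μ i : L) = 0
        · rw [hzero, zero_lie]
        · have hit' : i ∈ t' := Finset.mem_filter.mpr ⟨hi, hzero⟩
          have : i₀ < i := lt_of_le_of_ne (t'.min'_le i hit') (Ne.symm hne')
          rw [hlow (d + i₀ - i) (by omega), lie_zero]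
    rw [hcomp]
    intro hzero
    have hmem : (μ i₀ : L) ∈ S i₀ ⊓ HZ := ⟨(μ i₀).2, hzero⟩
    rw [hSdisj i₀] at hmem
    exact hμ0 (by simpa using hmem)
  -- a finite set of degrees covering L
  obtain ⟨sL, hsL⟩ := Module.finite_def.mp (inferInstance : Module.Finite ℂ L)
  set T : Finset ℤ := sL.biUnion (fun x => (decompose 𝒢 x).support) with hT
  have hTtop : (⨆ i ∈ T, 𝒢 i) = ⊤ := by
    refine le_antisymm le_top ?_
    rw [← hsL, Submodule.span_le]
    intro x hx
    have hx' : x ∈ sL := hx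
    have hdx := DirectSum.sum_support_decompose 𝒢 x
    rw [SetLike.mem_coe, ← hdx]
    refine Submodule.sum_mem _ fun i hi => ?_
    have h𝒢le : 𝒢 i ≤ ⨆ i ∈ T, 𝒢 i :=
      le_iSup₂ (f := fun i (_ : i ∈ T) => 𝒢 i) i (Finset.mem_biUnion.mpr ⟨x, hx', hi⟩)
    exact h𝒢le (decompose 𝒢 x i).2
  -- rank of B is bounded by the sum of dims of the S i
  have hrangeB : LinearMap.range B = ⨆ i ∈ T, (𝒢 i).map B := by
    rw [LinearMap.range_eq_map, ← hTtop]
    simp only [Submodule.map_iSup]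
  have hmapBS : ∀ i : ℤ, (𝒢 i).map B = (S i).map B := by
    intro i
    conv_lhs => rw [← hSsup i]
    rw [Submodule.map_sup]
    have hb : Submodule.map B (𝒢 i ⊓ HZ) = ⊥ := by
      rw [eq_bot_iff]
      rintro x ⟨g, hg, rfl⟩
      have : B g = 0 := hg.2
      simp [this]
    rw [hb, sup_bot_eq]
  have hrB_le : finrank ℂ (LinearMap.range B) ≤ ∑ i ∈ T, finrank ℂ (S i) := by
    rw [hrangeB]
    refine le_trans (aux_finrank_biSup_le (fun i => (𝒢 i).map B) T) ?_
    refine Finset.sum_le_sum fun i _ => ?_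
    rw [hmapBS i]
    exact Submodule.finrank_map_le B (S i)
  -- split the degrees
  set Tn : Finset ℤ := T.filter (fun i => i < 0) with hTn
  set Tp : Finset ℤ := T.filter (fun i => ¬ i < 0) with hTp
  have hsplit : ∑ i ∈ Tn, finrank ℂ (S i) + ∑ i ∈ Tp, finrank ℂ (S i)
      = ∑ i ∈ T, finrank ℂ (S i) :=
    Finset.sum_filter_add_sum_filter_not T _ _
  -- negative part: bounded by rank of Q
  have hQrange_fd : FiniteDimensional ℂ (LinearMap.range Q) := inferInstance
  set Sn : Submodule ℂ L := ⨆ i ∈ Tn, S i with hSn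
  have hSnrank : finrank ℂ Sn = ∑ i ∈ Tn, finrank ℂ (S i) :=
    aux_finrank_biSup_eq S hSind Tn
  have hSndisj : Sn ⊓ LinearMap.ker Q = ⊥ := by
    rw [eq_bot_iff]
    intro x hx
    rw [Submodule.mem_bot]
    by_contra hx0
    obtain ⟨i₀, hi₀, hne⟩ := keyG Tn x hx.1 hx0
    have hi₀neg : i₀ < 0 := (Finset.mem_filter.mp hi₀).2
    apply hne
    have hxq : Q x = 0 := hx.2
    have := congrFun hxq (d + i₀)
    rwa [hQapply x (d + i₀) (by omega)] at this
  have hneg : ∑ i ∈ Tn, finrank ℂ (S i) ≤ finrank ℂ (LinearMap.range Q) := by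
    have h1 := aux_finrank_map_add Q Sn
    rw [hSndisj, finrank_bot, add_zero] at h1
    rw [← hSnrank, ← h1]
    refine Submodule.finrank_mono ?_
    rw [LinearMap.range_eq_map]
    exact Submodule.map_mono le_top
  -- positive part: bounded by rank of A restricted to PS
  set Sp : Submodule ℂ L := ⨆ i ∈ Tp, S i with hSp
  have hSprank : finrank ℂ Sp = ∑ i ∈ Tp, finrank ℂ (S i) :=
    aux_finrank_biSup_eq S hSind Tp
  have hSpleP : Sp ≤ PS := by
    refine iSup₂_le fun i hi => ?_
    have h0i : 0 ≤ i := by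
      have := (Finset.mem_filter.mp hi).2; omega
    exact le_trans (hSle i) (le_iSup₂ (f := fun i (_ : 0 ≤ i) => 𝒢 i) i h0i)
  have hSpdisj : Sp ⊓ LinearMap.ker A = ⊥ := by
    rw [eq_bot_iff]
    intro x hx
    rw [Submodule.mem_bot]
    by_contra hx0
    obtain ⟨i₀, hi₀, hne⟩ := keyG Tp x hx.1 hx0
    apply hne
    have hxa : (⁅x, y⁆ : V) = 0 := hx.2
    rw [hxa]
    simp [grComp]
  have hpos : ∑ i ∈ Tp, finrank ℂ (S i) ≤ finrank ℂ ((PS).map A) := by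
    have h1 := aux_finrank_map_add A Sp
    rw [hSpdisj, finrank_bot, add_zero] at h1
    rw [← hSprank, ← h1]
    exact Submodule.finrank_mono (Submodule.map_mono hSpleP)
  -- dimension of PS ⊔ KY
  have hPK : finrank ℂ ↥(PS ⊔ KY) = finrank ℂ ((PS).map A) + finrank ℂ KY := by
    have h1 := aux_finrank_map_add A (PS ⊔ KY)
    have h2 : (PS ⊔ KY) ⊓ LinearMap.ker A = KY := by
      rw [hkerA]; exact inf_eq_right.mpr le_sup_right
    have h3 : (PS ⊔ KY).map A = (PS).map A := by
      rw [Submodule.map_sup]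
      have hk : (KY).map A = ⊥ := by
        rw [eq_bot_iff]
        rintro x ⟨g, hg, rfl⟩
        have : A g = 0 := hg
        simp [this]
      rw [hk, sup_bot_eq]
    rw [h2, h3] at h1
    omega
  -- rank-nullity for Q and B
  have hGydrank : finrank ℂ Gyd + finrank ℂ (LinearMap.range Q) = finrank ℂ L := by
    have := LinearMap.finrank_range_add_finrank_ker Q
    rw [hkerQ] at this
    omega
  have hHrank : finrank ℂ HZ + finrank ℂ (LinearMap.range B) = finrank ℂ L := by
    have := LinearMap.finrank_range_add_finrank_ker B
    rw [hkerB] at this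
    omega
  -- construct F as a complement of PS ⊔ KY inside Gyd
  obtain ⟨C, hC⟩ := Submodule.exists_isCompl (Submodule.comap Gyd.subtype (PS ⊔ KY))
  set F : Submodule ℂ L := C.map Gyd.subtype with hF
  have hFle : F ≤ Gyd := Submodule.map_subtype_le _ _
  have hFsup : (PS ⊔ KY) ⊔ F = Gyd := by
    have h1 : Submodule.map Gyd.subtype
        (Submodule.comap Gyd.subtype (PS ⊔ KY) ⊔ C) = Gyd := by
      rw [hC.codisjoint.eq_top, Submodule.map_subtype_top]
    rw [Submodule.map_sup, Submodule.map_comap_subtype,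
      inf_eq_right.mpr hPKle] at h1
    exact h1
  have hFdisj : (PS ⊔ KY) ⊓ F = ⊥ := by
    rw [eq_bot_iff]
    rintro x ⟨hx1, hx2⟩
    obtain ⟨c, hc, rfl⟩ := hx2
    have hcm : c ∈ Submodule.comap Gyd.subtype (PS ⊔ KY) := hx1
    have : c = 0 := Submodule.disjoint_def.mp hC.disjoint c hcm hc
    simp [this]
  have hFrank : finrank ℂ F + finrank ℂ ↥(PS ⊔ KY) = finrank ℂ Gyd := by
    have h := Submodule.finrank_sup_add_finrank_inf_eq (PS ⊔ KY) F
    rw [hFdisj, hFsup, finrank_bot, add_zero] at h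
    omega
  -- assemble
  refine ⟨Gyd, hset, hPKle, F, hFle, ?_, hFsup.symm⟩
  have hfinal : finrank ℂ (LinearMap.range B)
      ≤ finrank ℂ (LinearMap.range Q) + finrank ℂ ((PS).map A) := by omega
  omega
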